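/- Let n, k ∈ ℕ and let S₂¹, …, S₂ᵏ ⊆ [n] satisfy: |S₂ᵖ ∩ S₂^q| ≤ 1 for all p ≠ q, and every agent belongs to exactly two of the sets (and each S₂ᵖ is nonempty). Let S₁ᵖ := [n] \ S₂ᵖ; for each agent j let l(j) < r(j) be the two indices p with j ∈ S₂ᵖ; for A ∈ 𝒜_n define the modified scores σ̂_{S₁^{l(j)}}(j) := ∑_{i ∈ S₁^{l(j)}} A_{ij} and σ̂_{S₁^{r(j)}}(j) := ∑_{i ∈ S₁^{r(j)} \ S₁^{l(j)}} A_{ij}; and for p ∈ [k] let iᵖ be the element j ∈ S₂ᵖ maximizing (σ̂_{S₁ᵖ}(j), j) lexicographically. Then for X := { iᵖ | p ∈ [k] } (a set, duplicates merged) it holds that σ(X;A) ≥ ∑_{p ∈ [k]} σ̂_{S₁ᵖ}(iᵖ), where σ(X;A) = ∑_{i∈[n], j∈X} A_{ij}. -/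

import Mathlib

open Finset

/-- A valid weight matrix: nonnegative entries and zero diagonal. -/
def IsValidMatrix {n : ℕ} (A : Matrix (Fin n) (Fin n) ℝ) : Prop :=
  (∀ i j, 0 ≤ A i j) ∧ ∀ i, A i i = 0

/-- Score of a subset `S` of agents. -/
def score {n : ℕ} (A : Matrix (Fin n) (Fin n) ℝ) (S : Finset (Fin n)) : ℝ :=
  ∑ i : Fin n, ∑ j ∈ S, A i j

/-- The voter set of partition `p`: the complement of the candidate set `S₂ p`. -/
def voters {n k : ℕ} (S₂ : Fin k → Finset (Fin n)) (p : Fin k) : Finset (Fin n) :=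
  Finset.univ \ S₂ p

/-- The modified score `σ̂_{S₁ᵖ}(j)` of candidate `j` in partition `p ∈ {l j, r j}`:
all votes from `S₁^{l j}` in the first candidacy, and the remaining votes
(from `S₁^{r j} \ S₁^{l j}`) in the second candidacy. -/
def mhat {n k : ℕ} (S₂ : Fin k → Finset (Fin n)) (l r : Fin n → Fin k)
    (A : Matrix (Fin n) (Fin n) ℝ) (p : Fin k) (j : Fin n) : ℝ :=
  if p = l j then ∑ i ∈ voters S₂ (l j), A i j
  else ∑ i ∈ voters S₂ (r j) \ voters S₂ (l j), A i j

/-- `ip` is the element of `S₂ p` maximizing the pair `(σ̂_{S₁ᵖ}(j), j)`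
lexicographically. -/
def IsLexArgmax {n k : ℕ} (S₂ : Fin k → Finset (Fin n)) (l r : Fin n → Fin k)
    (A : Matrix (Fin n) (Fin n) ℝ) (p : Fin k) (ip : Fin n) : Prop :=
  ip ∈ S₂ p ∧ ∀ j ∈ S₂ p,
    mhat S₂ l r A p j < mhat S₂ l r A p ip ∨
      (mhat S₂ l r A p j = mhat S₂ l r A p ip ∧ j ≤ ip)

/-- The true score of the selected set `X = {iᵖ | p ∈ [k]}` is at least the sum
over the partitions of the modified scores of the selected agents. -/
theorem stmt13 (n k : ℕ) (S₂ : Fin k → Finset (Fin n))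
    (hlin : ∀ p q, p ≠ q → (S₂ p ∩ S₂ q).card ≤ 1)
    (htwo : ∀ v : Fin n, (Finset.univ.filter (fun p => v ∈ S₂ p)).card = 2)
    (hne : ∀ p, (S₂ p).Nonempty)
    (l r : Fin n → Fin k) (hlr : ∀ j, l j < r j)
    (hl : ∀ j, j ∈ S₂ (l j)) (hr : ∀ j, j ∈ S₂ (r j))
    (A : Matrix (Fin n) (Fin n) ℝ) (hA : IsValidMatrix A)
    (isel : Fin k → Fin n) (hsel : ∀ p, IsLexArgmax S₂ l r A p (isel p)) :
    score A (Finset.univ.image isel) ≥ ∑ p : Fin k, mhat S₂ l r A p (isel p) := by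
 -- proof
  classical
  have hAnn := hA.1
  have hlrne : ∀ j : Fin n, l j ≠ r j := fun j => (hlr j).ne
  have hmnn : ∀ p j, 0 ≤ mhat S₂ l r A p j := by
    intro p j
    unfold mhat
    split <;> exact Finset.sum_nonneg fun i _ => hAnn i j
  have hfil : ∀ j : Fin n, (Finset.univ.filter (fun p => j ∈ S₂ p)) = {l j, r j} := by
    intro j
    symm
    apply Finset.eq_of_subset_of_card_le
    · intro p hp
      simp only [Finset.mem_insert, Finset.mem_singleton] at hp
      rcases hp with h | h <;> subst h
      · simp [hl j]
      · simp [hr j]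
    · rw [htwo j, Finset.card_insert_of_notMem (by simp [hlrne j]), Finset.card_singleton]
  have key : ∀ j : Fin n, ∑ p ∈ Finset.univ.filter (fun p => isel p = j),
      mhat S₂ l r A p (isel p) ≤ ∑ i : Fin n, A i j := by
    intro j
    have hsub : (Finset.univ.filter (fun p => isel p = j)) ⊆ ({l j, r j} : Finset (Fin k)) := by
      intro p hp
      simp only [Finset.mem_filter] at hp
      have : p ∈ Finset.univ.filter (fun p => j ∈ S₂ p) := by
        simp only [Finset.mem_filter, Finset.mem_univ, true_and]
        rw [← hp.2]; exact (hsel p).1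
      rwa [hfil j] at this
    have h1 : ∑ p ∈ Finset.univ.filter (fun p => isel p = j), mhat S₂ l r A p (isel p)
        = ∑ p ∈ Finset.univ.filter (fun p => isel p = j), mhat S₂ l r A p j := by
      apply Finset.sum_congr rfl
      intro p hp
      simp only [Finset.mem_filter] at hp
      rw [hp.2]
    rw [h1]
    have h2 : ∑ p ∈ Finset.univ.filter (fun p => isel p = j), mhat S₂ l r A p j
        ≤ ∑ p ∈ ({l j, r j} : Finset (Fin k)), mhat S₂ l r A p j :=
      Finset.sum_le_sum_of_subset_of_nonneg hsub (fun p _ _ => hmnn p j)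
    refine h2.trans ?_
    rw [Finset.sum_pair (hlrne j)]
    have hml : mhat S₂ l r A (l j) j = ∑ i ∈ voters S₂ (l j), A i j := by
      unfold mhat; rw [if_pos rfl]
    have hmr : mhat S₂ l r A (r j) j = ∑ i ∈ voters S₂ (r j) \ voters S₂ (l j), A i j := by
      unfold mhat; rw [if_neg (hlrne j).symm]
    rw [hml, hmr, ← Finset.sum_union (Finset.disjoint_sdiff)]
    exact Finset.sum_le_sum_of_subset_of_nonneg (Finset.subset_univ _)
      (fun i _ _ => hAnn i j)
  have hmap : ∀ p ∈ (Finset.univ : Finset (Fin k)), isel p ∈ Finset.univ.image isel :=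
    fun p hp => Finset.mem_image_of_mem isel hp
  have hfib := Finset.sum_fiberwise_of_maps_to hmap (fun p => mhat S₂ l r A p (isel p))
  rw [ge_iff_le, ← hfib]
  unfold score
  rw [show (∑ i : Fin n, ∑ j ∈ Finset.univ.image isel, A i j) = ∑ j ∈ Finset.univ.image isel, ∑ i : Fin n, A i j from Finset.sum_comm]
  exact Finset.sum_le_sum fun j _ => key j
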